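/- (Lemma 1, transitivity.) The action Φ is transitive on the VI-SLAM total space: for any two states (P, v, p₁, …, pₙ) and (P', v', p'₁, …, p'ₙ) satisfying (P T_C)⁻¹(pᵢ) ≠ 0 and (P' T_C)⁻¹(p'ᵢ) ≠ 0 for all i, there exists a group element (A, w, Q₁, …, Qₙ) ∈ G such that Φ((A, w, Qᵢ), (P, v, pᵢ)) = (P', v', p'ᵢ). -/

import Mathlib

open scoped InnerProductSpace Matrix

noncomputable section

/-- Vectors in ℝ³ with the Euclidean norm. -/
abbrev V3 := EuclideanSpace ℝ (Fin 3)

abbrev Mat3 := Matrix (Fin 3) (Fin 3) ℝ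

/-- `R ∈ SO(3)` iff `RᵀR = I` and `det R = 1`. -/
def SO3 (R : Mat3) : Prop := R.transpose * R = 1 ∧ R.det = 1

/-- Matrix-vector multiplication. -/
def mv (M : Mat3) (q : V3) : V3 := WithLp.toLp 2 (M.mulVec q)

/-- The standard gravity direction `e₃ = (0,0,1)`. -/
def e3 : V3 := WithLp.toLp 2 ![0, 0, 1]

/-- Elements of SE(3) are pairs `(R, x)`. -/
abbrev SE3 := Mat3 × V3

/-- SE(3) group product: `(R₁,x₁)·(R₂,x₂) = (R₁R₂, x₁ + R₁x₂)`. -/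
def seMul (P Q : SE3) : SE3 := (P.1 * Q.1, P.2 + mv P.1 Q.2)

/-- SE(3) identity `(I, 0)`. -/
def seId : SE3 := (1, 0)

/-- SE(3) inverse: `P⁻¹ = (Rᵀ, −Rᵀx)`. -/
def seInv (P : SE3) : SE3 := (P.1ᵀ, -(mv P.1ᵀ P.2))

/-- Action of SE(3) on ℝ³: `P(q) = R_P q + x_P`. -/
def seAct (P : SE3) (q : V3) : V3 := mv P.1 q + P.2

/-- The subgroup `SE_{e₃}(3) = {(R,x) ∈ SE(3) : R e₃ = e₃}`. -/
def SEe3 : Set SE3 := {S | SO3 S.1 ∧ mv S.1 e3 = e3}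

/-- Elements of SOT(3) are pairs `(R_Q, c_Q)`. -/
abbrev SOT3 := Mat3 × ℝ

/-- SOT(3) product `(R₁,c₁)·(R₂,c₂) = (R₁R₂, c₁c₂)`. -/
def sotMul (Q1 Q2 : SOT3) : SOT3 := (Q1.1 * Q2.1, Q1.2 * Q2.2)

/-- SOT(3) inverse `(R_Qᵀ, c_Q⁻¹)`. -/
def sotInv (Q : SOT3) : SOT3 := (Q.1ᵀ, Q.2⁻¹)

/-- Action of SOT(3) on ℝ³: `Q(q) = c_Q R_Q q`. -/
def sotAct (Q : SOT3) (q : V3) : V3 := Q.2 • mv Q.1 q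

/-- Elements of the VI-SLAM group `G = SE₂(3) × SOT(3)ⁿ`. -/
abbrev GVI (n : ℕ) := SE3 × V3 × (Fin n → SOT3)

/-- VI-SLAM group product. -/
def gMul {n : ℕ} (X Y : GVI n) : GVI n :=
  (seMul X.1 Y.1, X.2.1 + mv X.1.1 Y.2.1, fun i => sotMul (X.2.2 i) (Y.2.2 i))

/-- VI-SLAM group identity `(I₄, 0, (I,1)ᵢ)`. -/
def gId {n : ℕ} : GVI n := (seId, 0, fun _ => (1, 1))

/-- VI-SLAM group inverse `(A⁻¹, −R_Aᵀw, Qᵢ⁻¹)`. -/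
def gInv {n : ℕ} (X : GVI n) : GVI n :=
  (seInv X.1, -(mv X.1.1ᵀ X.2.1), fun i => sotInv (X.2.2 i))

/-- Membership in the VI-SLAM group: rotation parts in SO(3), scale parts positive. -/
def gMem {n : ℕ} (X : GVI n) : Prop :=
  SO3 X.1.1 ∧ ∀ i, SO3 (X.2.2 i).1 ∧ 0 < (X.2.2 i).2

/-- The action `Φ((A, w, Qᵢ), (P, v, pᵢ)) = (PA, R_Aᵀ(v − w), (P A T_C)(Qᵢ⁻¹((P T_C)⁻¹(pᵢ))))`. -/
def Phi {n : ℕ} (TC : SE3) (X : GVI n) (ξ : SE3 × V3 × (Fin n → V3)) :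
    SE3 × V3 × (Fin n → V3) :=
  (seMul ξ.1 X.1, mv X.1.1ᵀ (ξ.2.1 - X.2.1),
    fun i => seAct (seMul (seMul ξ.1 X.1) TC)
      (sotAct (sotInv (X.2.2 i)) (seAct (seInv (seMul ξ.1 TC)) (ξ.2.2 i))))



namespace PhiAux

/-- Householder reflection through the hyperplane orthogonal to `x`. -/
noncomputable def hh (x : Fin 3 → ℝ) : Mat3 := 1 - (2 / (x ⬝ᵥ x)) • Matrix.vecMulVec x x

lemma dps_ne (x : Fin 3 → ℝ) (hx : x ≠ 0) : (x ⬝ᵥ x) ≠ 0 :=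
  fun h => hx (dotProduct_self_eq_zero.mp h)

lemma dps_nonneg (x : Fin 3 → ℝ) : 0 ≤ x ⬝ᵥ x :=
  Finset.sum_nonneg fun i _ => mul_self_nonneg _

lemma dps_pos (x : Fin 3 → ℝ) (hx : x ≠ 0) : 0 < x ⬝ᵥ x :=
  lt_of_le_of_ne (dps_nonneg x) (Ne.symm (dps_ne x hx))

lemma vmv_mul_vmv (x : Fin 3 → ℝ) :
    Matrix.vecMulVec x x * Matrix.vecMulVec x x = (x ⬝ᵥ x) • Matrix.vecMulVec x x := by
  ext i j
  simp [Matrix.mul_apply, Matrix.vecMulVec_apply, dotProduct, Finset.mul_sum,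
    Finset.sum_mul]
  apply Finset.sum_congr rfl
  intro k _; ring

lemma hh_transpose (x : Fin 3 → ℝ) : (hh x)ᵀ = hh x := by
  unfold hh
  rw [Matrix.transpose_sub, Matrix.transpose_one, Matrix.transpose_smul]
  congr 1
  ext i j
  simp [Matrix.vecMulVec_apply, mul_comm]

lemma hh_mul_self (x : Fin 3 → ℝ) (hx : x ≠ 0) : hh x * hh x = 1 := by
  have hs := dps_ne x hx
  unfold hh
  simp only [Matrix.sub_mul, Matrix.mul_sub, Matrix.one_mul, Matrix.mul_one,
    Matrix.smul_mul, Matrix.mul_smul, vmv_mul_vmv, smul_smul, smul_sub]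
  set s : ℝ := x ⬝ᵥ x with hsdef
  rw [div_mul_cancel₀ (2:ℝ) hs]
  have h3 : 2 / s * 2 = 2 / s + 2 / s := by ring
  rw [h3, add_smul]
  abel

lemma hh_det (x : Fin 3 → ℝ) (hx : x ≠ 0) : (hh x).det = -1 := by
  have hs := dps_ne x hx
  have h1 : hh x = 1 + Matrix.replicateCol Unit ((-(2 / (x ⬝ᵥ x))) • x) * Matrix.replicateRow Unit x := by
    ext i j
    simp [hh, Matrix.vecMulVec_apply, Matrix.mul_apply, Matrix.one_apply, sub_eq_add_neg]
    ring
  rw [h1, Matrix.det_one_add_replicateCol_mul_replicateRow]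
  rw [dotProduct_smul, smul_eq_mul, neg_mul, div_mul_cancel₀ _ hs]
  norm_num

lemma hh_mulVec (x y : Fin 3 → ℝ) :
    (hh x).mulVec y = y - ((2 / (x ⬝ᵥ x)) * (x ⬝ᵥ y)) • x := by
  unfold hh
  rw [Matrix.sub_mulVec, Matrix.one_mulVec, Matrix.smul_mulVec]
  congr 1
  ext i
  simp [Matrix.mulVec, Matrix.vecMulVec_apply, dotProduct, Finset.mul_sum]
  rw [Finset.sum_mul]
  apply Finset.sum_congr rfl
  intro k _; ring

lemma SO3.transpose {R : Mat3} (h : SO3 R) : SO3 Rᵀ := by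
  refine ⟨?_, by rw [Matrix.det_transpose]; exact h.2⟩
  rw [Matrix.transpose_transpose]
  exact mul_eq_one_comm.mp h.1

lemma SO3.mulT {R : Mat3} (h : SO3 R) : R * Rᵀ = 1 :=
  mul_eq_one_comm.mp h.1

lemma SO3.mul {R S : Mat3} (hR : SO3 R) (hS : SO3 S) : SO3 (R * S) := by
  refine ⟨?_, by rw [Matrix.det_mul, hR.2, hS.2, one_mul]⟩
  rw [Matrix.transpose_mul, mul_assoc, ← mul_assoc Rᵀ, hR.1, one_mul, hS.1]

lemma SO3_hh_mul_hh (x y : Fin 3 → ℝ) (hx : x ≠ 0) (hy : y ≠ 0) : SO3 (hh x * hh y) := by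
  constructor
  · rw [Matrix.transpose_mul, hh_transpose, hh_transpose, mul_assoc, ← mul_assoc (hh x),
      hh_mul_self x hx, one_mul, hh_mul_self y hy]
  · rw [Matrix.det_mul, hh_det x hx, hh_det y hy]; norm_num

/-- Transitivity of SO(3) on spheres: for nonzero vectors of equal dot-square,
some rotation carries `b` to `a`. -/
lemma exists_rot (a b : Fin 3 → ℝ) (ha : a ≠ 0) (hb : b ≠ 0) (hab : a ⬝ᵥ a = b ⬝ᵥ b) :
    ∃ R : Mat3, SO3 R ∧ R.mulVec b = a := by
  by_cases hm : a + b = 0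
  · -- a = -b : use two reflections, fixing resp. negating b
    have hba : a = -b := eq_neg_of_add_eq_zero_left hm
    obtain ⟨z, hz, hzb⟩ : ∃ z : Fin 3 → ℝ, z ≠ 0 ∧ z ⬝ᵥ b = 0 := by
      by_cases h01 : b 0 = 0 ∧ b 1 = 0
      · refine ⟨![1, 0, 0], ?_, ?_⟩
        · intro h
          have := congrFun h 0
          simp at this
        · simp [dotProduct, Fin.sum_univ_three, h01.1]
      · refine ⟨![b 1, -(b 0), 0], ?_, ?_⟩
        · intro h
          refine h01 ⟨?_, ?_⟩
          · have := congrFun h 1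
            simpa using this
          · have := congrFun h 0
            simpa using this
        · simp [dotProduct, Fin.sum_univ_three]
          ring
    refine ⟨hh b * hh z, SO3_hh_mul_hh b z hb hz, ?_⟩
    rw [← Matrix.mulVec_mulVec, hh_mulVec z b, hzb]
    simp only [mul_zero, zero_smul, sub_zero]
    rw [hh_mulVec b b, div_mul_cancel₀ (2:ℝ) (dps_ne b hb), hba, two_smul]
    abel
  · -- generic case : two reflections, through a and through a + b
    set m : Fin 3 → ℝ := a + b with hmdef
    have hsm : m ⬝ᵥ m = 2 * (m ⬝ᵥ b) := by
      simp only [hmdef, add_dotProduct, dotProduct_add, hab,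
        dotProduct_comm b a]
      ring
    have hmb : m ⬝ᵥ b ≠ 0 := by
      intro h
      exact dps_ne m hm (by rw [hsm, h, mul_zero])
    refine ⟨hh a * hh m, SO3_hh_mul_hh a m ha hm, ?_⟩
    rw [← Matrix.mulVec_mulVec, hh_mulVec m b]
    have h1 : 2 / (m ⬝ᵥ m) * (m ⬝ᵥ b) = 1 := by
      rw [hsm, div_mul_eq_mul_div, mul_comm 2 (m ⬝ᵥ b)]
      exact div_self (mul_ne_zero hmb two_ne_zero)
    rw [h1, one_smul]
    have h2 : b - m = -a := by rw [hmdef]; abel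
    rw [h2, hh_mulVec a (-a), dotProduct_neg, mul_neg,
      div_mul_cancel₀ (2:ℝ) (dps_ne a ha), neg_smul, sub_neg_eq_add, two_smul]
    abel

lemma dps_smul (c : ℝ) (x : Fin 3 → ℝ) : (c • x) ⬝ᵥ (c • x) = c * c * (x ⬝ᵥ x) := by
  rw [smul_dotProduct, dotProduct_smul, smul_eq_mul, smul_eq_mul]
  ring

end PhiAux

open PhiAux

lemma mv_add (M : Mat3) (x y : V3) : mv M (x + y) = mv M x + mv M y :=
  congrArg (WithLp.toLp 2) (Matrix.mulVec_add M x y)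

lemma mv_neg (M : Mat3) (x : V3) : mv M (-x) = -(mv M x) :=
  congrArg (WithLp.toLp 2) (Matrix.mulVec_neg x M)

lemma mv_mv (M N : Mat3) (x : V3) : mv M (mv N x) = mv (M * N) x :=
  congrArg (WithLp.toLp 2) (Matrix.mulVec_mulVec x M N)

lemma mv_one (x : V3) : mv 1 x = x :=
  congrArg (WithLp.toLp 2) (Matrix.one_mulVec x)

lemma mv_smul (M : Mat3) (r : ℝ) (x : V3) : mv M (r • x) = r • mv M x :=
  congrArg (WithLp.toLp 2) (Matrix.mulVec_smul M r x)

lemma seMul_inv_cancel (S T : SE3) (hS : S.1 * S.1ᵀ = 1) :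
    seMul S (seMul (seInv S) T) = T := by
  unfold seMul seInv
  refine Prod.ext ?_ ?_
  · show S.1 * (S.1ᵀ * T.1) = T.1
    rw [← mul_assoc, hS, one_mul]
  · show S.2 + mv S.1 (-(mv S.1ᵀ S.2) + mv S.1ᵀ T.2) = T.2
    rw [mv_add, mv_neg, mv_mv, mv_mv, hS, mv_one, mv_one]
    abel

lemma seAct_inv_cancel (S : SE3) (hS : S.1 * S.1ᵀ = 1) (q : V3) :
    seAct S (seAct (seInv S) q) = q := by
  unfold seAct seInv
  show mv S.1 (mv S.1ᵀ q + -(mv S.1ᵀ S.2)) + S.2 = q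
  rw [mv_add, mv_neg, mv_mv, mv_mv, hS, mv_one, mv_one]
  abel

/-- (Lemma 1, transitivity.) The action `Φ` is transitive on the
VI-SLAM total space. -/
theorem Phi_transitive (n : ℕ) (hn : 1 ≤ n) (TC : SE3) (hTC : SO3 TC.1)
    (P P' : SE3) (hP : SO3 P.1) (hP' : SO3 P'.1) (v v' : V3) (p p' : Fin n → V3)
    (hp : ∀ i, seAct (seInv (seMul P TC)) (p i) ≠ 0)
    (hp' : ∀ i, seAct (seInv (seMul P' TC)) (p' i) ≠ 0) :
    ∃ X : GVI n, gMem X ∧ Phi TC X (P, v, p) = (P', v', p') := by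
  classical
  -- the SE₂(3) part
  set A : SE3 := seMul (seInv P) P' with hAdef
  have hA1 : A.1 = P.1ᵀ * P'.1 := rfl
  have hASO : SO3 A.1 := by rw [hA1]; exact PhiAux.SO3.mul (PhiAux.SO3.transpose hP) hP'
  have hPA : seMul P A = P' := seMul_inv_cancel P P' (PhiAux.SO3.mulT hP)
  -- the landmark parts
  set a : Fin n → V3 := fun i => seAct (seInv (seMul P TC)) (p i) with hadef
  set b : Fin n → V3 := fun i => seAct (seInv (seMul P' TC)) (p' i) with hbdef
  have ha : ∀ i, a i ≠ 0 := hp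
  have hb : ∀ i, b i ≠ 0 := hp'
  have ha' : ∀ i, (a i : Fin 3 → ℝ) ≠ 0 := fun i h => ha i (WithLp.ofLp_injective 2 h)
  have hb' : ∀ i, (b i : Fin 3 → ℝ) ≠ 0 := fun i h => hb i (WithLp.ofLp_injective 2 h)
  set c : Fin n → ℝ := fun i => Real.sqrt ((a i ⬝ᵥ a i) / (b i ⬝ᵥ b i)) with hcdef
  have hcpos : ∀ i, 0 < c i := fun i =>
    Real.sqrt_pos.mpr (div_pos (PhiAux.dps_pos _ (ha' i)) (PhiAux.dps_pos _ (hb' i)))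
  have hcb : ∀ i, (c i • b i : Fin 3 → ℝ) ≠ 0 := fun i =>
    smul_ne_zero (ne_of_gt (hcpos i)) (hb' i)
  have hdot : ∀ i, (a i) ⬝ᵥ (a i) = ((c i • b i : Fin 3 → ℝ) ⬝ᵥ (c i • b i : Fin 3 → ℝ)) := by
    intro i
    have hc2 : c i * c i = (a i ⬝ᵥ a i) / (b i ⬝ᵥ b i) :=
      Real.mul_self_sqrt (le_of_lt (div_pos (PhiAux.dps_pos _ (ha' i)) (PhiAux.dps_pos _ (hb' i))))
    rw [PhiAux.dps_smul, hc2, div_mul_cancel₀ _ (PhiAux.dps_ne _ (hb' i))]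
  choose R hRSO hRb using fun i =>
    PhiAux.exists_rot (a i) (c i • b i) (ha' i) (hcb i) (hdot i)
  refine ⟨⟨A, v - mv A.1 v', fun i => (R i, c i)⟩, ⟨hASO, fun i => ⟨hRSO i, hcpos i⟩⟩, ?_⟩
  unfold Phi
  refine Prod.ext hPA (Prod.ext ?_ ?_)
  · show mv A.1ᵀ (v - (v - mv A.1 v')) = v'
    rw [sub_sub_cancel, mv_mv, hASO.1, mv_one]
  · funext i
    show seAct (seMul (seMul P A) TC) (sotAct (sotInv (R i, c i)) (a i)) = p' i
    have hsot : sotAct (sotInv (R i, c i)) (a i) = b i := by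
      apply WithLp.ofLp_injective 2
      show ((c i)⁻¹ • ((R i)ᵀ *ᵥ (a i)) : Fin 3 → ℝ) = b i
      rw [← hRb i, Matrix.mulVec_mulVec, (hRSO i).1, Matrix.one_mulVec, smul_smul,
        inv_mul_cancel₀ (ne_of_gt (hcpos i)), one_smul]
    rw [hPA, hsot, hbdef]
    exact seAct_inv_cancel (seMul P' TC) (PhiAux.SO3.mulT (PhiAux.SO3.mul hP' hTC)) (p' i)
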